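/- For all natural numbers p and k, one has ∑_{t=0}^{p} 2^{p−t} · binom(t,k) = ∑_{l=k+1}^{p+1} binom(p+1,l). -/

import Mathlib

lemma aux_shift (p k : ℕ) :
    ∑ l ∈ Finset.Icc (k + 1) (p + 2), (Nat.choose (p + 1) (l - 1) : ℤ)
      = ∑ j ∈ Finset.Icc k (p + 1), (Nat.choose (p + 1) j : ℤ) := by
  rw [show Finset.Icc (k + 1) (p + 2)
      = (Finset.Icc k (p + 1)).map (addRightEmbedding 1) by
    rw [Finset.map_add_right_Icc]]
  rw [Finset.sum_map]
  simp [addRightEmbedding]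

lemma aux_bot (p k : ℕ) :
    ∑ j ∈ Finset.Icc k (p + 1), (Nat.choose (p + 1) j : ℤ)
      = (Nat.choose (p + 1) k : ℤ) + ∑ l ∈ Finset.Icc (k + 1) (p + 1), (Nat.choose (p + 1) l : ℤ) := by
  by_cases h : k ≤ p + 1
  · rw [Finset.Icc_eq_cons_Ioc h, Finset.sum_cons, ← Finset.Icc_add_one_left_eq_Ioc]
  · rw [Finset.Icc_eq_empty h, Finset.Icc_eq_empty (by omega),
      Nat.choose_eq_zero_of_lt (by omega)]
    simp

lemma aux_step (p k : ℕ) :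
    ∑ l ∈ Finset.Icc (k + 1) (p + 2), (Nat.choose (p + 2) l : ℤ)
      = 2 * ∑ l ∈ Finset.Icc (k + 1) (p + 1), (Nat.choose (p + 1) l : ℤ)
        + (Nat.choose (p + 1) k : ℤ) := by
  have h1 : ∀ l ∈ Finset.Icc (k + 1) (p + 2),
      (Nat.choose (p + 2) l : ℤ)
        = (Nat.choose (p + 1) l : ℤ) + (Nat.choose (p + 1) (l - 1) : ℤ) := by
    intro l hl
    simp only [Finset.mem_Icc] at hl
    obtain ⟨m, rfl⟩ : ∃ m, l = m + 1 := ⟨l - 1, by omega⟩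
    rw [show p + 2 = (p + 1) + 1 from rfl, Nat.choose_succ_succ (p + 1) m]
    simp only [Nat.add_sub_cancel]
    push_cast
    ring
  have e1 : ∑ l ∈ Finset.Icc (k + 1) (p + 2), (Nat.choose (p + 1) l : ℤ)
      = ∑ l ∈ Finset.Icc (k + 1) (p + 1), (Nat.choose (p + 1) l : ℤ) := by
    refine (Finset.sum_subset (Finset.Icc_subset_Icc_right (by omega)) ?_).symm
    intro x hx hx'
    simp only [Finset.mem_Icc] at hx hx'
    rw [Nat.choose_eq_zero_of_lt (by omega)]
    simp
  rw [Finset.sum_congr rfl h1, Finset.sum_add_distrib, e1, aux_shift p k, aux_bot p k]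
  ring

/-- For all natural numbers `p` and `k`,
`∑_{t=0}^{p} 2^(p-t) * binom(t,k) = ∑_{l=k+1}^{p+1} binom(p+1,l)` (sums in `ℤ`). -/
theorem stmt_2 (p k : ℕ) :
    ∑ t ∈ Finset.range (p + 1), (2 : ℤ) ^ (p - t) * (Nat.choose t k : ℤ)
      = ∑ l ∈ Finset.Icc (k + 1) (p + 1), (Nat.choose (p + 1) l : ℤ) := by
  induction p with
  | zero =>
    rcases k with _ | k
    · simp
    · rw [Finset.Icc_eq_empty (by omega)]
      simp [Nat.choose_eq_zero_of_lt (by omega : 0 < k + 1)]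
  | succ p ih =>
    rw [Finset.sum_range_succ]
    have h2 : ∀ t ∈ Finset.range (p + 1),
        (2 : ℤ) ^ (p + 1 - t) * (Nat.choose t k : ℤ)
          = 2 * ((2 : ℤ) ^ (p - t) * (Nat.choose t k : ℤ)) := by
      intro t ht
      simp only [Finset.mem_range] at ht
      rw [show p + 1 - t = (p - t) + 1 by omega, pow_succ]
      ring
    rw [Finset.sum_congr rfl h2, ← Finset.mul_sum, ih, aux_step]
    simp
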